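/- Let M ⊆ Mat_r(K) be a commutative subalgebra containing the identity matrix I, let {E_1,…,E_n} be its unique maximal complete set of orthogonal idempotents, and for each i let M_i = E_iM and M_i^nil = {A ∈ M_i : A is nilpotent}. Then M_i = K·E_i ⊕ M_i^nil for every i if and only if K contains every eigenvalue of every matrix A ∈ M (i.e., the characteristic polynomial of each A ∈ M splits over K). -/

import Mathlib

open MvPolynomial

namespace Kleppe

noncomputable section

open scoped Classical

variable {K : Type*}

/-- The iterated partial-derivative operator `∂^β` applied to `f`
(in the standard polynomial ring; char 0 identification of divided powers). -/
def derivMulti [CommSemiring K] {r : ℕ} (β : Fin r →₀ ℕ) (f : MvPolynomial (Fin r) K) :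
    MvPolynomial (Fin r) K :=
  ∑ α ∈ f.support,
    if β ≤ α then
      MvPolynomial.monomial (α - β)
        ((∏ i : Fin r, (α i).descFactorial (β i)) • MvPolynomial.coeff α f)
    else 0

/-- The apolarity action `D(f)` of a differential operator `D ∈ R = K[∂_1,…,∂_r]`
on a polynomial `f ∈ ℛ = K[x_1,…,x_r]`; `∂_i` acts as `∂/∂x_i`. -/
def contract [CommSemiring K] {r : ℕ} (D f : MvPolynomial (Fin r) K) :
    MvPolynomial (Fin r) K :=
  ∑ β ∈ D.support, MvPolynomial.coeff β D • derivMulti β f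

/-- `(A∂)_i = Σ_k A_{ik} ∂_k`, as an element of `R`. -/
def rowOp [CommSemiring K] {r : ℕ} (A : Matrix (Fin r) (Fin r) K) (i : Fin r) :
    MvPolynomial (Fin r) K :=
  ∑ k : Fin r, A i k • X k

/-- The matrix space `M_f = {A | ∂_i·(A∂)_j − ∂_j·(A∂)_i ∈ ann_R f for all i,j}`. -/
def Mf [CommRing K] {r : ℕ} (f : MvPolynomial (Fin r) K) :
    Set (Matrix (Fin r) (Fin r) K) :=
  {A | ∀ i j : Fin r, contract (X i * rowOp A j - X j * rowOp A i) f = 0}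

/-- `γ_f(A)`: the unique homogeneous `g` of degree `d` with `∂_i g = (A∂)_i (f)` for all `i`
(defined by choice; junk value `0` if no such `g` exists). -/
def gammaf [CommRing K] {r : ℕ} (d : ℕ) (f : MvPolynomial (Fin r) K)
    (A : Matrix (Fin r) (Fin r) K) : MvPolynomial (Fin r) K :=
  if h : ∃ g : MvPolynomial (Fin r) K, g.IsHomogeneous d ∧
      ∀ i, contract (X i) g = contract (rowOp A i) f then h.choose else 0

/-- `R_e(g)`, the space of contractions of `g` by homogeneous operators of degree `e`. -/
def partials [CommRing K] {r : ℕ} (e : ℕ) (g : MvPolynomial (Fin r) K) :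
    Submodule K (MvPolynomial (Fin r) K) :=
  Submodule.span K {p | ∃ D : MvPolynomial (Fin r) K, D.IsHomogeneous e ∧ p = contract D g}

/-- `G` is (the set of components of) a regular splitting of `f`:
`f = Σ_{g ∈ G} g`, each `g` a nonzero degree-`d` form, and the spaces of
`(d−1)`-st partials `R_{d−1}(g)` are independent. -/
def IsRegSplit [CommRing K] {r : ℕ} (d : ℕ) (f : MvPolynomial (Fin r) K)
    (G : Set (MvPolynomial (Fin r) K)) : Prop :=
  G.Finite ∧ G.Nonempty ∧ (∀ g ∈ G, g ≠ 0 ∧ g.IsHomogeneous d) ∧ (∑ᶠ g ∈ G, g) = f ∧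
  ∀ g ∈ G, Disjoint (partials (d - 1) g) (⨆ h ∈ G \ {g}, partials (d - 1) h)

/-- A complete set of orthogonal idempotents in `M_f`. -/
def IsCoid [CommRing K] {r : ℕ} (f : MvPolynomial (Fin r) K)
    (E : Set (Matrix (Fin r) (Fin r) K)) : Prop :=
  E.Finite ∧ E ⊆ Mf f ∧ (∀ A ∈ E, A ≠ 0) ∧
  (∀ A ∈ E, ∀ B ∈ E, A ≠ B → A * B = 0) ∧ (∑ᶠ A ∈ E, A) = 1

end

/-- A complete set of orthogonal idempotents in a matrix algebra: a finite set of
nonzero, pairwise-orthogonal matrices summing to the identity. -/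
def IsMatCoid {K : Type*} [CommRing K] {r : ℕ} (E : Set (Matrix (Fin r) (Fin r) K)) :
    Prop :=
  E.Finite ∧ (∀ e ∈ E, e ≠ 0) ∧ (∀ e ∈ E, ∀ e' ∈ E, e ≠ e' → e * e' = 0) ∧
  (∑ᶠ e ∈ E, e) = 1


namespace KleppeAux

open scoped Polynomial

variable {K : Type*} [Field K] {r : ℕ}

lemma idem_pow {R : Type*} [Monoid R] {e : R} (he : e * e = e) (n : ℕ) :
    e ^ (n + 1) = e := by
  induction n with
  | zero => simp
  | succ n ih => rw [pow_succ, ih, he]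

/-- If `A` commutes with `e` then so does any polynomial in `A`. -/
lemma commute_aeval {A e : Matrix (Fin r) (Fin r) K} (hAe : Commute A e) (q : K[X]) :
    Commute (Polynomial.aeval A q) e := by
  rw [Polynomial.aeval_eq_sum_range]
  exact Commute.sum_left _ _ _ (fun i _ => (hAe.pow_left i).smul_left _)

lemma mul_aeval_idem {A e : Matrix (Fin r) (Fin r) K} (he : e * e = e) (hAe : Commute A e)
    (q1 q2 : K[X]) :
    (Polynomial.aeval A q1 * e) * (Polynomial.aeval A q2 * e) = Polynomial.aeval A (q1 * q2) * e := by
  rw [_root_.map_mul, mul_assoc (Polynomial.aeval A q1) e (Polynomial.aeval A q2 * e), ← mul_assoc e (Polynomial.aeval A q2) e,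
    ← (commute_aeval hAe q2).eq, mul_assoc (Polynomial.aeval A q2) e e, he, ← mul_assoc]

/-- Key induction: if `e` is a nonzero "primitive" idempotent commuting with `A`, and a nonzero
split polynomial `p` satisfies `p(A) e = 0`, then `(A - λ)^m e = 0` for some `λ`. -/
lemma exists_pow_mul_eq_zero (A e : Matrix (Fin r) (Fin r) K) (he : e * e = e) (he0 : e ≠ 0)
    (hAe : Commute A e)
    (hprim : ∀ s : K[X], Polynomial.aeval A s * e * (Polynomial.aeval A s * e) = Polynomial.aeval A s * e →
      Polynomial.aeval A s * e = 0 ∨ Polynomial.aeval A s * e = e) :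
    ∀ n (p : K[X]), p.natDegree ≤ n → p ≠ 0 → p.Splits →
      Polynomial.aeval A p * e = 0 → ∃ lam : K, ∃ m : ℕ, (A - lam • 1) ^ m * e = 0 := by
  have hconst : ∀ p : K[X], p.natDegree = 0 → p ≠ 0 → Polynomial.aeval A p * e = 0 → False := by
    intro p hdeg hp0 hann
    have hc : p = Polynomial.C (p.coeff 0) := Polynomial.eq_C_of_natDegree_eq_zero hdeg
    have hc0 : p.coeff 0 ≠ 0 := fun h => hp0 (by rw [hc, h, _root_.map_zero])
    rw [hc, Polynomial.aeval_C, Algebra.algebraMap_eq_smul_one, smul_mul_assoc, one_mul] at hann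
    exact he0 (by
      have := congrArg (fun y => (p.coeff 0)⁻¹ • y) hann
      simpa [smul_smul, inv_mul_cancel₀ hc0] using this)
  intro n
  induction n with
  | zero =>
    intro p hdeg hp0 _ hann
    exact absurd (hconst p (Nat.le_zero.mp hdeg) hp0 hann) not_false
  | succ n ih =>
    intro p hdeg hp0 hsplit hann
    by_cases hd : p.natDegree = 0
    · exact absurd (hconst p hd hp0 hann) not_false
    have hdeg0 : p.degree ≠ 0 :=
      fun h => hd (Polynomial.natDegree_eq_zero_iff_degree_le_zero.mpr h.le)
    obtain ⟨lam, hlam⟩ := hsplit.exists_eval_eq_zero hdeg0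
    have hroot : p.IsRoot lam := by simpa using hlam
    have hkpos : 0 < p.rootMultiplicity lam := (Polynomial.rootMultiplicity_pos hp0).mpr hroot
    obtain ⟨g, hpg, hnd⟩ := p.exists_eq_pow_rootMultiplicity_mul_and_not_dvd hp0 lam
    set k := p.rootMultiplicity lam with hk
    have hg0 : g ≠ 0 := fun h => hp0 (by rw [hpg, h, mul_zero])
    have hco : IsCoprime ((Polynomial.X - Polynomial.C lam) ^ p.rootMultiplicity lam) g :=
      (((Polynomial.irreducible_X_sub_C lam).coprime_iff_not_dvd.mpr hnd)).pow_left
    obtain ⟨u, v, huv⟩ := hco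
    have hQQ : Polynomial.aeval A (v * g) * e * (Polynomial.aeval A (v * g) * e) = Polynomial.aeval A (v * g) * e := by
      rw [mul_aeval_idem he hAe]
      have hss : (v * g) * (v * g) = v * g - v * u * p := by
        rw [hpg]; linear_combination (v * g) * huv
      rw [hss, _root_.map_sub, sub_mul,
        show Polynomial.aeval A (v * u * p) = Polynomial.aeval A (v * u) * Polynomial.aeval A p from _root_.map_mul _ _ _,
        mul_assoc, hann, mul_zero, sub_zero]
    rcases hprim (v * g) hQQ with hQ0 | hQe
    · -- g annihilates e; use induction
      have hgg : g = u * p + g * (v * g) := by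
        rw [hpg]; linear_combination (-g) * huv
      have hganh : Polynomial.aeval A g * e = 0 := by
        rw [hgg, _root_.map_add, add_mul,
          show Polynomial.aeval A (u * p) = Polynomial.aeval A u * Polynomial.aeval A p from _root_.map_mul _ _ _,
          show Polynomial.aeval A (g * (v * g)) = Polynomial.aeval A g * Polynomial.aeval A (v * g) from _root_.map_mul _ _ _,
          mul_assoc, hann, mul_zero, mul_assoc, hQ0, mul_zero, add_zero]
      have hdegp : p.natDegree = k + g.natDegree := by
        conv_lhs => rw [hpg]
        rw [Polynomial.natDegree_mul (pow_ne_zero _ (Polynomial.X_sub_C_ne_zero lam)) hg0,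
          Polynomial.natDegree_pow, Polynomial.natDegree_X_sub_C, mul_one]
      have hgle : g.natDegree ≤ n := by omega
      have hgsplit : g.Splits :=
        hsplit.of_dvd hp0 (Dvd.intro_left _ hpg.symm)
      exact ih g hgle hg0 hgsplit hganh
    · -- (A - lam)^k e = 0
      refine ⟨lam, k, ?_⟩
      have hXC : Polynomial.aeval A ((Polynomial.X - Polynomial.C lam) ^ k) = (A - lam • 1) ^ k := by
        rw [_root_.map_pow, _root_.map_sub, Polynomial.aeval_X, Polynomial.aeval_C, Algebra.algebraMap_eq_smul_one]
      have hvp : (Polynomial.X - Polynomial.C lam) ^ k * (v * g) = v * p := by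
        conv_rhs => rw [hpg]
        ring
      calc (A - lam • 1) ^ k * e
          = Polynomial.aeval A ((Polynomial.X - Polynomial.C lam) ^ k) * (Polynomial.aeval A (v * g) * e) := by
            rw [hXC, hQe]
        _ = Polynomial.aeval A ((Polynomial.X - Polynomial.C lam) ^ k * (v * g)) * e := by
            rw [show Polynomial.aeval A ((Polynomial.X - Polynomial.C lam) ^ k * (v * g))
                = Polynomial.aeval A ((Polynomial.X - Polynomial.C lam) ^ k) * Polynomial.aeval A (v * g) from _root_.map_mul _ _ _, mul_assoc]
        _ = Polynomial.aeval A v * (Polynomial.aeval A p * e) := by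
            rw [hvp, show Polynomial.aeval A (v * p) = Polynomial.aeval A v * Polynomial.aeval A p from _root_.map_mul _ _ _,
              mul_assoc]
        _ = 0 := by rw [hann, mul_zero]

/-- `(q(B)) v = q(μ) • v` for an eigenvector `v`. -/
lemma aeval_mulVec {L : Type*} [Field L] {B : Matrix (Fin r) (Fin r) L} {v : Fin r → L} {μ : L}
    (hev : B.mulVec v = μ • v) (q : L[X]) :
    (Polynomial.aeval B q).mulVec v = q.eval μ • v := by
  have hpow : ∀ n : ℕ, (B ^ n).mulVec v = (μ ^ n) • v := by
    intro n
    induction n with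
    | zero => simp [Matrix.one_mulVec]
    | succ n ihn =>
      rw [pow_succ', ← Matrix.mulVec_mulVec, ihn, Matrix.mulVec_smul, hev, smul_smul, pow_succ]
  induction q using Polynomial.induction_on' with
  | add p q hp hq => rw [_root_.map_add, Matrix.add_mulVec, hp, hq, Polynomial.eval_add, add_smul]
  | monomial n a =>
    rw [Polynomial.aeval_monomial, Polynomial.eval_monomial, Algebra.algebraMap_eq_smul_one, smul_mul_assoc, one_mul,
      Matrix.smul_mulVec, hpow, smul_smul]

/-- If a nonzero polynomial splitting over `K` annihilates `A`, then the characteristic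
polynomial of `A` splits over `K`. -/
lemma charpoly_splits_of_aeval_eq_zero (A : Matrix (Fin r) (Fin r) K) {p : K[X]} (hp0 : p ≠ 0)
    (hs : p.Splits) (hann : Polynomial.aeval A p = 0) :
    A.charpoly.Splits := by
  rw [Polynomial.splits_iff_splits]
  right
  intro g hg hdvd
  set L := AlgebraicClosure K
  set φ := algebraMap K L with hφ
  have hφinj : Function.Injective φ := φ.injective
  have hgdeg : (g.map φ).degree ≠ 0 := by
    rw [Polynomial.degree_map]
    intro h
    exact (Polynomial.natDegree_pos_iff_degree_pos.mp hg.natDegree_pos).ne' h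
  obtain ⟨μ, hμ⟩ := IsAlgClosed.exists_root (g.map φ) hgdeg
  have h1 : ((A.map φ).charpoly).eval μ = 0 := by
    have hdvd2 : g.map φ ∣ (A.map φ).charpoly := by
      rw [Matrix.charpoly_map]
      exact Polynomial.map_dvd _ hdvd
    obtain ⟨q, hq⟩ := hdvd2
    rw [hq, Polynomial.eval_mul, hμ.eq_zero, zero_mul]
  have hdet : (Matrix.scalar (Fin r) μ - A.map φ).det = 0 := by
    have h2 : Polynomial.eval μ (Matrix.charmatrix (A.map φ)).det = 0 := h1
    rw [_root_.eval_det, Matrix.matPolyEquiv_charmatrix, Polynomial.eval_sub, Polynomial.eval_X,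
      Polynomial.eval_C] at h2
    exact h2
  obtain ⟨v, hv0, hv⟩ := Matrix.exists_mulVec_eq_zero_iff.mpr hdet
  have hscalar : Matrix.scalar (Fin r) μ = μ • (1 : Matrix (Fin r) (Fin r) L) := by
    ext i j
    by_cases h : i = j <;>
      simp [Matrix.scalar_apply, Matrix.diagonal, Matrix.one_apply, h]
  have hev : (A.map φ).mulVec v = μ • v := by
    rw [Matrix.sub_mulVec, hscalar, Matrix.smul_mulVec, Matrix.one_mulVec,
      sub_eq_zero] at hv
    exact hv.symm
  have hmapann : Polynomial.aeval (A.map φ) (p.map φ) = 0 := by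
    have hcomp : (algebraMap L (Matrix (Fin r) (Fin r) L)).comp φ
        = (φ.mapMatrix : Matrix (Fin r) (Fin r) K →+* Matrix (Fin r) (Fin r) L).comp
          (algebraMap K (Matrix (Fin r) (Fin r) K)) := by
      ext x : 1
      ext i j
      simp [Matrix.algebraMap_matrix_apply, RingHom.mapMatrix_apply, Matrix.map_apply,
        apply_ite φ]
    have h2 := Polynomial.map_aeval_eq_aeval_map hcomp p A
    rw [hann, _root_.map_zero, RingHom.mapMatrix_apply] at h2
    exact h2.symm
  have heval0 : (p.map φ).eval μ = 0 := by
    have h3 : (p.map φ).eval μ • v = 0 := by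
      rw [← aeval_mulVec hev (p.map φ), hmapann, Matrix.zero_mulVec]
    by_contra hne
    exact hv0 (by
      have := congrArg (fun w => ((p.map φ).eval μ)⁻¹ • w) h3
      simpa [smul_smul, inv_mul_cancel₀ hne] using this)
  have hroots : μ ∈ (p.map φ).roots :=
    Polynomial.mem_roots'.mpr ⟨Polynomial.map_ne_zero hp0, heval0⟩
  rw [hs.roots_map_of_injective hφinj] at hroots
  obtain ⟨c, -, hcμ⟩ := Multiset.mem_map.mp hroots
  have hgc : g.eval c = 0 := by
    have h4 : (g.map φ).eval (φ c) = 0 := by rw [hcμ]; exact hμ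
    rw [Polynomial.eval_map, Polynomial.eval₂_at_apply] at h4
    exact hφinj (by rw [h4, _root_.map_zero])
  exact Polynomial.degree_eq_one_of_irreducible_of_root hg hgc


lemma coid_sum_finset {E : Set (Matrix (Fin r) (Fin r) K)} (hE : IsMatCoid E) :
    ∑ x ∈ hE.1.toFinset, x = 1 := by
  rw [← finsum_mem_coe_finset, hE.1.coe_toFinset]
  exact hE.2.2.2

lemma coid_idem {E : Set (Matrix (Fin r) (Fin r) K)} (hE : IsMatCoid E)
    {e : Matrix (Fin r) (Fin r) K} (he : e ∈ E) : e * e = e := by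
  have h1 : e * (∑ x ∈ hE.1.toFinset, x) = e := by rw [coid_sum_finset hE, mul_one]
  rw [Finset.mul_sum, Finset.sum_eq_single_of_mem e (hE.1.mem_toFinset.mpr he)
    (fun b hb hbe => hE.2.2.1 e he b (hE.1.mem_toFinset.mp hb) (Ne.symm hbe))] at h1
  exact h1

lemma primitive_of_max (M : Subalgebra K (Matrix (Fin r) (Fin r) K))
    (hcomm : ∀ A ∈ M, ∀ B ∈ M, A * B = B * A)
    (E : Set (Matrix (Fin r) (Fin r) K)) (hEM : E ⊆ (M : Set (Matrix (Fin r) (Fin r) K)))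
    (hE : IsMatCoid E)
    (hmax : ∀ E' : Set (Matrix (Fin r) (Fin r) K),
      E' ⊆ (M : Set (Matrix (Fin r) (Fin r) K)) → IsMatCoid E' → E'.ncard ≤ E.ncard)
    {e : Matrix (Fin r) (Fin r) K} (he : e ∈ E) {q : Matrix (Fin r) (Fin r) K}
    (hqM : q ∈ M) (hqq : q * q = q) (hqe : q * e = q) : q = 0 ∨ q = e := by
  by_contra hcon
  push_neg at hcon
  obtain ⟨hq0, hqne⟩ := hcon
  have hee : e * e = e := coid_idem hE he
  obtain ⟨hfin, hne, horth, hsum⟩ := hE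
  have heM : e ∈ M := hEM he
  have heq : e * q = q := by rw [hcomm e heM q hqM, hqe]
  have hqe' : q * (e - q) = 0 := by rw [mul_sub, hqe, hqq, sub_self]
  have heqq : (e - q) * q = 0 := by rw [sub_mul, heq, hqq, sub_self]
  have hq_ne : q ≠ e - q := by
    intro h
    have h2 : q * q = 0 := by nth_rw 1 [h]; exact heqq
    rw [hqq] at h2
    exact hq0 h2
  have hq_notin : q ∉ E \ {e} := by
    rintro ⟨hqE, hne'⟩
    have h2 := horth q hqE e he (by simpa using hne')
    rw [hqe] at h2
    exact hq0 h2
  have hemq_notin : e - q ∉ E \ {e} := by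
    rintro ⟨hE2, hne2⟩
    have hne2' : e - q ≠ e := by simpa using hne2
    have h2 := horth (e - q) hE2 e he hne2'
    rw [sub_mul, hee, hqe] at h2
    exact hqne (sub_eq_zero.mp h2).symm
  have hq_notin2 : q ∉ insert (e - q) (E \ {e}) := by
    simp only [Set.mem_insert_iff]
    rintro (h | h)
    exacts [hq_ne h, hq_notin h]
  have he_notin : e ∉ E \ {e} := fun h => h.2 rfl
  have hqb : ∀ b ∈ E \ {e}, q * b = 0 := by
    intro b hb
    have heb : e * b = 0 := horth e he b hb.1 (by rintro rfl; exact hb.2 rfl)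
    rw [← hqe, mul_assoc, heb, mul_zero]
  have heqb : ∀ b ∈ E \ {e}, (e - q) * b = 0 := by
    intro b hb
    have heb : e * b = 0 := horth e he b hb.1 (by rintro rfl; exact hb.2 rfl)
    rw [sub_mul, heb, hqb b hb, sub_zero]
  have hE'sub : insert q (insert (e - q) (E \ {e})) ⊆ (M : Set (Matrix (Fin r) (Fin r) K)) := by
    intro x hx
    rcases hx with rfl | hx
    · exact hqM
    rcases hx with rfl | hx
    · exact M.sub_mem heM hqM
    · exact hEM hx.1
  have hcoid : IsMatCoid (insert q (insert (e - q) (E \ {e}))) := by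
    refine ⟨(hfin.diff.insert _).insert _, ?_, ?_, ?_⟩
    · intro x hx
      rcases hx with rfl | hx
      · exact hq0
      rcases hx with rfl | hx
      · exact sub_ne_zero.mpr (Ne.symm hqne)
      · exact hne x hx.1
    · intro a ha b hb hab
      have key : ∀ x ∈ insert q (insert (e - q) (E \ {e})), x ∈ M :=
        fun x hx => hE'sub hx
      rcases ha with rfl | ha
      · rcases hb with rfl | hb
        · exact absurd rfl hab
        rcases hb with rfl | hb
        · exact hqe'
        · exact hqb b hb
      rcases ha with rfl | ha
      · rcases hb with rfl | hb
        · exact heqq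
        rcases hb with rfl | hb
        · exact absurd rfl hab
        · exact heqb b hb
      · rcases hb with hb' | hb
        · rw [hb', hcomm a (hEM ha.1) q hqM]
          exact hqb a ha
        rcases hb with hb' | hb
        · rw [hb', hcomm a (hEM ha.1) (e - q) (M.sub_mem heM hqM)]
          exact heqb a ha
        · exact horth a ha.1 b hb.1 hab
    · rw [finsum_mem_insert _ hq_notin2 (hfin.diff.insert _),
        finsum_mem_insert _ hemq_notin hfin.diff]
      have hEsum : e + ∑ᶠ x ∈ E \ {e}, x = 1 := by
        rw [← finsum_mem_insert (fun x => x) he_notin hfin.diff,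
          Set.insert_diff_singleton, Set.insert_eq_of_mem he]
        exact hsum
      rw [← hEsum]
      abel
  have h1 : (E \ {e}).ncard + 1 = E.ncard := Set.ncard_diff_singleton_add_one he hfin
  have h2 : (insert q (insert (e - q) (E \ {e}))).ncard = (E \ {e}).ncard + 2 := by
    rw [Set.ncard_insert_of_notMem hq_notin2 (hfin.diff.insert _),
      Set.ncard_insert_of_notMem hemq_notin hfin.diff]
  have h3 := hmax _ hE'sub hcoid
  omega


end KleppeAux

/-- Proposition 3.6 f. Let `M ⊆ Mat_r(K)` be a commutative subalgebra
containing `I`, with unique maximal complete set of orthogonal idempotents `{E_1,…,E_n}`,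
and let `M_i = E_iM`. Then `M_i = K·E_i ⊕ M_i^nil` for every `i` (i.e. every element of
each `M_i` is a scalar multiple of `E_i` plus a nilpotent) iff `K` contains every
eigenvalue of every `A ∈ M` (i.e. every characteristic polynomial splits over `K`). -/
theorem scalar_plus_nilpotent_iff_splits {K : Type*} [Field K] {r : ℕ}
    (M : Subalgebra K (Matrix (Fin r) (Fin r) K))
    (hcomm : ∀ A ∈ M, ∀ B ∈ M, A * B = B * A)
    (E : Set (Matrix (Fin r) (Fin r) K)) (hEM : E ⊆ (M : Set (Matrix (Fin r) (Fin r) K)))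
    (hE : IsMatCoid E)
    (hmax : ∀ E' : Set (Matrix (Fin r) (Fin r) K),
      E' ⊆ (M : Set (Matrix (Fin r) (Fin r) K)) → IsMatCoid E' → E'.ncard ≤ E.ncard) :
    (∀ e ∈ E, ∀ B ∈ M, ∃ c : K, IsNilpotent (e * B - c • e)) ↔
      ∀ A ∈ M, Polynomial.Splits (Matrix.charpoly A) := by
  classical
  constructor
  · intro h A hA
    have key : ∀ e : Matrix (Fin r) (Fin r) K, ∃ (c : K) (k : ℕ),
        e ∈ E → (A - c • 1) ^ (k + 1) * e = 0 := by
      intro e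
      by_cases he' : e ∈ E
      · obtain ⟨c, n, hn⟩ := h e he' A hA
        refine ⟨c, n, fun _ => ?_⟩
        have heM : e ∈ M := hEM he'
        have hee : e * e = e := KleppeAux.coid_idem hE he'
        have h1 : Commute A e := hcomm A hA e heM
        have hcom : Commute (A - c • 1) e := h1.sub_left ((Commute.one_left e).smul_left c)
        have hform : (A - c • 1) * e = e * A - c • e := by
          rw [sub_mul, smul_mul_assoc, one_mul, hcomm A hA e heM]
        have h2 : ((A - c • 1) * e) ^ (n + 1) = 0 := by
          rw [hform, pow_succ, hn, zero_mul]
        calc (A - c • 1) ^ (n + 1) * e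
            = (A - c • 1) ^ (n + 1) * e ^ (n + 1) := by rw [KleppeAux.idem_pow hee]
          _ = ((A - c • 1) * e) ^ (n + 1) := (hcom.mul_pow _).symm
          _ = 0 := h2
      · exact ⟨0, 0, fun h'' => absurd h'' he'⟩
    choose c k hck using key
    have hmonic : (∏ e ∈ hE.1.toFinset,
        (Polynomial.X - Polynomial.C (c e)) ^ (k e + 1)).Monic :=
      Polynomial.monic_prod_of_monic _ _
        (fun e _ => (Polynomial.monic_X_sub_C (c e)).pow _)
    have hsplits : (∏ e ∈ hE.1.toFinset,
        (Polynomial.X - Polynomial.C (c e)) ^ (k e + 1)).Splits :=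
      Polynomial.Splits.prod
        (fun e _ => (Polynomial.Splits.X_sub_C _).pow _)
    have hann : Polynomial.aeval A (∏ e ∈ hE.1.toFinset,
        (Polynomial.X - Polynomial.C (c e)) ^ (k e + 1)) = 0 := by
      have hsum1 : ∑ e ∈ hE.1.toFinset, e = 1 := KleppeAux.coid_sum_finset hE
      have h3 : Polynomial.aeval A (∏ e ∈ hE.1.toFinset,
          (Polynomial.X - Polynomial.C (c e)) ^ (k e + 1))
          = ∑ e' ∈ hE.1.toFinset, Polynomial.aeval A (∏ e ∈ hE.1.toFinset,
            (Polynomial.X - Polynomial.C (c e)) ^ (k e + 1)) * e' := by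
        rw [← Finset.mul_sum, hsum1, mul_one]
      rw [h3]
      refine Finset.sum_eq_zero fun e' he' => ?_
      have hfac : (∏ e ∈ hE.1.toFinset, (Polynomial.X - Polynomial.C (c e)) ^ (k e + 1))
          = (∏ e ∈ hE.1.toFinset.erase e', (Polynomial.X - Polynomial.C (c e)) ^ (k e + 1)) *
            (Polynomial.X - Polynomial.C (c e')) ^ (k e' + 1) :=
        (Finset.prod_erase_mul hE.1.toFinset _ he').symm
      have h4 : Polynomial.aeval A ((Polynomial.X - Polynomial.C (c e')) ^ (k e' + 1))
          = (A - c e' • 1) ^ (k e' + 1) := by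
        rw [map_pow, map_sub, Polynomial.aeval_X, Polynomial.aeval_C,
          Algebra.algebraMap_eq_smul_one]
      rw [hfac, _root_.map_mul, mul_assoc, h4, hck e' (hE.1.mem_toFinset.mp he'), mul_zero]
    exact KleppeAux.charpoly_splits_of_aeval_eq_zero A hmonic.ne_zero hsplits hann
  · intro hsp e he' B hB
    have heM : e ∈ M := hEM he'
    have hA : e * B ∈ M := M.mul_mem heM hB
    have hee : e * e = e := KleppeAux.coid_idem hE he'
    have he0 : e ≠ 0 := hE.2.1 e he'
    have hAe : Commute (e * B) e := hcomm (e * B) hA e heM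
    have hprim : ∀ s : Polynomial K,
        Polynomial.aeval (e * B) s * e * (Polynomial.aeval (e * B) s * e)
          = Polynomial.aeval (e * B) s * e →
        Polynomial.aeval (e * B) s * e = 0 ∨ Polynomial.aeval (e * B) s * e = e := by
      intro s hidem
      have hsM : Polynomial.aeval (e * B) s ∈ M := by
        have h1 : Algebra.adjoin K {e * B} ≤ M :=
          Algebra.adjoin_le (Set.singleton_subset_iff.mpr hA)
        exact h1 (Polynomial.aeval_mem_adjoin_singleton _ _)
      exact KleppeAux.primitive_of_max M hcomm E hEM hE hmax he' (M.mul_mem hsM heM) hidem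
        (by rw [mul_assoc, hee])
    obtain ⟨lam, m, hm⟩ := KleppeAux.exists_pow_mul_eq_zero (e * B) e hee he0 hAe hprim
      ((e * B).charpoly.natDegree) _ le_rfl (Matrix.charpoly_monic _).ne_zero
      (hsp _ hA) (by rw [Matrix.aeval_self_charpoly, zero_mul])
    refine ⟨lam, m + 1, ?_⟩
    have hform : ((e * B) - lam • 1) * e = e * B - lam • e := by
      rw [sub_mul, smul_mul_assoc, one_mul, hAe.eq, ← mul_assoc, hee]
    have hcom2 : Commute ((e * B) - lam • 1) e :=
      hAe.sub_left ((Commute.one_left e).smul_left lam)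
    calc (e * B - lam • e) ^ (m + 1)
        = (((e * B) - lam • 1) * e) ^ (m + 1) := by rw [hform]
      _ = ((e * B) - lam • 1) ^ (m + 1) * e ^ (m + 1) := hcom2.mul_pow _
      _ = ((e * B) - lam • 1) * (((e * B) - lam • 1) ^ m * e) := by
          rw [KleppeAux.idem_pow hee, pow_succ', mul_assoc]
      _ = 0 := by rw [hm, mul_zero]


end Kleppe
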